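/- Let (r_1, …, r_a) be a composition of r+1 with a ≥ 2, let (k_{x_1}, …, k_r) ∈ D_{(r_1⋯r_a)}, set w = Π_2 Π_3 ⋯ Π_a, and let λ = (p_1, …, p_m) be a composition of r+1. Assume that w(α) is a negative root for every α ∈ Δ_λ. Then: (i) for every α ∈ Δ_λ there is a unique index l(α) ∈ {2, …, a} such that Π_{l(α)+1} Π_{l(α)+2} ⋯ Π_a(α) is a simple root (the empty product, when l(α) = a, being the identity) and Π_{l(α)} Π_{l(α)+1} ⋯ Π_a(α) is a negative root; and (ii) if both α_i ∈ Δ_λ and α_{i+1} ∈ Δ_λ, then l(α_{i+1}) ≤ l(α_i) − 1; in particular, if l(α_i) = 2 then α_{i+1} ∉ Δ_λ. -/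

import Mathlib

open Equiv Finset

/-- The simple reflection `s i = (i, i+1)` (1-based) in `S_{r+1}`, for `1 ≤ i ≤ r`;
the junk value `1` otherwise. -/
def sr (r i : ℕ) : Equiv.Perm (Fin (r + 1)) :=
  if h : 1 ≤ i ∧ i ≤ r then Equiv.swap ⟨i - 1, by omega⟩ ⟨i, by omega⟩ else 1

/-- The cycle `π_k` with ambient index `i`, i.e. `s_i s_{i-1} ⋯ s_k`
(the identity when `k = i + 1`). -/
def cyc (r i k : ℕ) : Equiv.Perm (Fin (r + 1)) :=
  ((List.range (i + 1 - k)).map fun t => sr r (i - t)).prod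

/-- The product `π_{k i} π_{k (i+1)} ⋯ π_{k j}`, the factor `π_{k t}` being the
cycle with ambient index `t`. -/
def cycProd (r : ℕ) (k : ℕ → ℕ) (i j : ℕ) : Equiv.Perm (Fin (r + 1)) :=
  ((List.range' i (j + 1 - i)).map fun t => cyc r t (k t)).prod

/-- Coxeter length of a permutation: the number of inversions. -/
def lenInv {n : ℕ} (w : Equiv.Perm (Fin n)) : ℕ :=
  (Finset.univ.filter fun p : Fin n × Fin n => p.1 < p.2 ∧ w p.2 < w p.1).card

/-- Partial sums of a (1-based) composition: `psum c j = c 1 + ⋯ + c j`. -/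
def psum (c : ℕ → ℕ) (j : ℕ) : ℕ := ∑ i ∈ Finset.Icc 1 j, c i

/-- The transpose partition of `(t 1, …, t b)`: `transp b t j = #{i ∈ [1,b] : t i ≥ j}`. -/
def transp (b : ℕ) (t : ℕ → ℕ) (j : ℕ) : ℕ :=
  ((Finset.Icc 1 b).filter fun i => j ≤ t i).card

/-- The element of `Fin (r+1)` with value `i` (for `i ≤ r`). -/
def finOf (r i : ℕ) : Fin (r + 1) := ⟨min i r, by omega⟩

/-- `w(α_i)` is a positive root, where `α_i = e_i − e_{i+1}` (1-based), i.e. the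
0-based pair `(i-1, i)`; `w(e_c − e_d) = e_{w c} − e_{w d}` is positive iff `w c < w d`. -/
def posRoot (r : ℕ) (w : Equiv.Perm (Fin (r + 1))) (i : ℕ) : Prop :=
  (w (finOf r (i - 1)) : ℕ) < w (finOf r i)

/-- `w(α_i)` is a negative root. -/
def negRoot (r : ℕ) (w : Equiv.Perm (Fin (r + 1))) (i : ℕ) : Prop :=
  (w (finOf r i) : ℕ) < w (finOf r (i - 1))

/-- `w(α_i)` is a simple root. -/
def simpleRoot (r : ℕ) (w : Equiv.Perm (Fin (r + 1))) (i : ℕ) : Prop :=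
  (w (finOf r i) : ℕ) = (w (finOf r (i - 1)) : ℕ) + 1

/-- `w(α_i) = α_j` (as roots: the image pair is `(j-1, j)` in 0-based indices). -/
def eqRoot (r : ℕ) (w : Equiv.Perm (Fin (r + 1))) (i j : ℕ) : Prop :=
  (w (finOf r (i - 1)) : ℕ) = j - 1 ∧ (w (finOf r i) : ℕ) = j

/-- `Π_l Π_{l+1} ⋯ Π_a` for the composition `c` and tuple `k`, where
`Π_j = π_{k_{x_{j-1}}} ⋯ π_{k_{x_j - 1}}` and `x_j = psum c j`. -/
def tailProd (r a : ℕ) (c k : ℕ → ℕ) (l : ℕ) : Equiv.Perm (Fin (r + 1)) :=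
  ((List.range' l (a + 1 - l)).map fun j => cycProd r k (psum c (j - 1)) (psum c j - 1)).prod

/-- The subgroup `W(P)`: generated by the simple reflections `s i` with `i ∈ [1,r]`
avoiding the partial sums `x 1, …, x (a-1)` of the composition `c`. -/
def WP (r a : ℕ) (c : ℕ → ℕ) : Subgroup (Equiv.Perm (Fin (r + 1))) :=
  Subgroup.closure
    {g | ∃ i, 1 ≤ i ∧ i ≤ r ∧ (∀ j, 1 ≤ j → j ≤ a - 1 → i ≠ psum c j) ∧ g = sr r i}

/-- `α_i ∈ Δ_λ` for the composition `λ = (p 1, …, p m)` of `r+1`. -/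
def inDelta (r m : ℕ) (p : ℕ → ℕ) (i : ℕ) : Prop :=
  1 ≤ i ∧ i ≤ r ∧ ∀ j, 1 ≤ j → j ≤ m - 1 → i ≠ psum p j

/-- The left coset `H · g`. -/
def cosetOf {G : Type*} [Group G] (H : Subgroup G) (g : G) : Set G :=
  {x | ∃ h ∈ H, x = h * g}

/-- The (0-based) positions `u` and `v` lie in the same block of the composition
`μ^⊤ = transp b t`; a negative root `e_c − e_d` lies in `Φ⁻_{μ^⊤}` iff its two
indices lie in the same block. -/
def sameBlock (b : ℕ) (t : ℕ → ℕ) (u v : ℕ) : Prop :=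
  ∃ j, 1 ≤ j ∧ j ≤ t 1 ∧
    psum (transp b t) (j - 1) ≤ u ∧ u < psum (transp b t) j ∧
    psum (transp b t) (j - 1) ≤ v ∧ v < psum (transp b t) j

lemma sr_apply (r i : ℕ) (h1 : 1 ≤ i) (h2 : i ≤ r) (w : Fin (r+1)) :
    ((sr r i) w : ℕ) = if (w:ℕ) = i - 1 then i else if (w:ℕ) = i then i - 1 else w := by
  rw [sr, dif_pos ⟨h1, h2⟩, Equiv.swap_apply_def]
  rcases w with ⟨v, hv⟩
  simp only [Fin.ext_iff]
  split_ifs <;> simp_all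

lemma cyc_succ (r i κ : ℕ) (h1 : 1 ≤ κ) (h : κ ≤ i) :
    cyc r i κ = sr r i * cyc r (i-1) κ := by
  rw [cyc, cyc, show i + 1 - κ = (i - 1 + 1 - κ) + 1 by omega, List.range_succ_eq_map]
  rw [List.map_cons, List.prod_cons, List.map_map, Nat.sub_zero]
  have hfun : ((fun t => sr r (i - t)) ∘ fun t => t + 1) = fun t => sr r (i - 1 - t) := by
    funext t
    simp only [Function.comp_apply]
    congr 1
    omega
  rw [hfun]

lemma cyc_apply (r : ℕ) : ∀ n i κ, i + 1 - κ = n → 1 ≤ κ → κ ≤ i + 1 → i ≤ r →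
    ∀ w : Fin (r+1), ((cyc r i κ) w : ℕ) =
      if (w:ℕ) + 1 = κ then i else if κ ≤ (w:ℕ) ∧ (w:ℕ) ≤ i then (w:ℕ) - 1 else (w:ℕ) := by
  intro n
  induction n with
  | zero =>
    intro i κ hn h1 h2 h3 w
    have hκ : κ = i + 1 := by omega
    subst hκ
    rw [cyc, show i + 1 - (i+1) = 0 by omega]
    simp only [List.range_zero, List.map_nil, List.prod_nil, Equiv.Perm.one_apply]
    have hw : (w:ℕ) ≤ r := Nat.lt_succ_iff.mp w.isLt
    split_ifs <;> omega
  | succ n ih =>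
    intro i κ hn h1 h2 h3 w
    have hκi : κ ≤ i := by omega
    rw [cyc_succ r i κ h1 hκi, Equiv.Perm.mul_apply]
    have hv := ih (i-1) κ (by omega) h1 (by omega) (by omega) w
    rw [sr_apply r i (by omega) h3]
    have hw : (w:ℕ) ≤ r := Nat.lt_succ_iff.mp w.isLt
    split_ifs at hv ⊢ <;> omega

lemma cyc_fix (r i κ : ℕ) (h1 : 1 ≤ κ) (h2 : κ ≤ i+1) (h3 : i ≤ r) (w : Fin (r+1))
    (h : (w:ℕ) + 1 < κ ∨ i < (w:ℕ)) : (cyc r i κ) w = w := by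
  have hv := cyc_apply r (i+1-κ) i κ rfl h1 h2 h3 w
  apply Fin.ext
  rw [hv]
  split_ifs <;> omega

lemma listprod_fix {n : ℕ} (L : List (Equiv.Perm (Fin n))) (P : Fin n → Prop)
    (h : ∀ g ∈ L, ∀ v, P v → g v = v) : ∀ v, P v → L.prod v = v := by
  induction L with
  | nil => intro v _; simp
  | cons g L ih =>
    intro v hv
    rw [List.prod_cons, Equiv.Perm.mul_apply,
      ih (fun g hg => h g (List.mem_cons_of_mem _ hg)) v hv,
      h g List.mem_cons_self v hv]

lemma perm_preserve {n : ℕ} (π : Equiv.Perm (Fin n)) (P : Fin n → Prop)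
    (h : ∀ v, ¬ P v → π v = v) (w : Fin n) (hw : P w) : P (π w) := by
  by_contra hcon
  have h2 := h _ hcon
  have h3 := π.injective h2
  rw [h3] at hcon
  exact hcon hw

lemma k_mono (k : ℕ → ℕ) (x y : ℕ) (h : ∀ i, x ≤ i → i < y → k i < k (i+1)) :
    ∀ t, x ≤ t → t ≤ y → k x ≤ k t := by
  intro t
  induction t with
  | zero =>
    intro h1 _
    have : x = 0 := by omega
    rw [this]
  | succ t ih =>
    intro h1 h2
    rcases Nat.lt_or_ge t (x) with h3 | h3
    · have : x = t + 1 := by omega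
      rw [this]
    · exact le_trans (ih h3 (by omega)) (le_of_lt (h t h3 (by omega)))

lemma cycProd_fix_high (r x y : ℕ) (k : ℕ → ℕ) (hy : y ≤ r)
    (hk : ∀ i, x ≤ i → i ≤ y → 1 ≤ k i ∧ k i ≤ i + 1)
    (w : Fin (r+1)) (h : y < (w:ℕ)) : cycProd r k x y w = w := by
  refine listprod_fix _ (fun v => y < (v:ℕ)) ?_ w h
  intro g hg v hv
  simp only [List.mem_map, List.mem_range'_1] at hg
  obtain ⟨t, ⟨ht1, ht2⟩, rfl⟩ := hg
  have htly : t ≤ y := by omega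
  exact cyc_fix r t (k t) (hk t ht1 htly).1 (hk t ht1 htly).2 (le_trans htly hy) v
    (Or.inr (by omega))

lemma cycProd_fix_low (r x y : ℕ) (k : ℕ → ℕ) (hy : y ≤ r)
    (hk : ∀ i, x ≤ i → i ≤ y → 1 ≤ k i ∧ k i ≤ i + 1)
    (hmono : ∀ i, x ≤ i → i < y → k i < k (i+1))
    (w : Fin (r+1)) (h : (w:ℕ) + 1 < k x) : cycProd r k x y w = w := by
  refine listprod_fix _ (fun v => (v:ℕ) + 1 < k x) ?_ w h
  intro g hg v hv
  simp only [List.mem_map, List.mem_range'_1] at hg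
  obtain ⟨t, ⟨ht1, ht2⟩, rfl⟩ := hg
  have htly : t ≤ y := by omega
  have hkt := k_mono k x y hmono t ht1 htly
  exact cyc_fix r t (k t) (hk t ht1 htly).1 (hk t ht1 htly).2 (le_trans htly hy) v
    (Or.inl (by omega))

lemma cycProd_le_high (r x y : ℕ) (k : ℕ → ℕ) (hy : y ≤ r)
    (hk : ∀ i, x ≤ i → i ≤ y → 1 ≤ k i ∧ k i ≤ i + 1)
    (w : Fin (r+1)) (h : (w:ℕ) ≤ y) : (cycProd r k x y w : ℕ) ≤ y := by
  refine perm_preserve _ (fun v => (v:ℕ) ≤ y) ?_ w h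
  intro v hv
  exact cycProd_fix_high r x y k hy hk v (by omega)

lemma cycProd_empty (r x y : ℕ) (k : ℕ → ℕ) (h : y + 1 - x = 0) : cycProd r k x y = 1 := by
  rw [cycProd, h]
  simp

lemma cycProd_succ (r x y : ℕ) (k : ℕ → ℕ) (h : x ≤ y) :
    cycProd r k x y = cyc r x (k x) * cycProd r k (x+1) y := by
  rw [cycProd, cycProd, show y + 1 - x = (y + 1 - (x+1)) + 1 by omega, List.range'_succ,
    List.map_cons, List.prod_cons]

lemma block_i_ii (r : ℕ) (k : ℕ → ℕ) :
    ∀ n x y, y + 1 - x = n → 1 ≤ x → y ≤ r →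
    (∀ i, x ≤ i → i ≤ y → 1 ≤ k i ∧ k i ≤ i + 1) →
    (∀ i, x ≤ i → i < y → k i < k (i+1)) →
    ∀ w₁ w₂ : Fin (r+1), (w₂:ℕ) = (w₁:ℕ) + 1 →
      (((cycProd r k x y) w₂ : ℕ) < ((cycProd r k x y) w₁ : ℕ) →
        x ≤ ((cycProd r k x y) w₁ : ℕ)) ∧
      (((cycProd r k x y) w₁ : ℕ) + 2 ≤ ((cycProd r k x y) w₂ : ℕ) →
        x ≤ ((cycProd r k x y) w₂ : ℕ)) := by
  intro n
  induction n with
  | zero =>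
    intro x y hn hx hy hk hmono w₁ w₂ h12
    rw [cycProd_empty r x y k hn]
    simp only [Equiv.Perm.one_apply]
    omega
  | succ n ih =>
    intro x y hn hx hy hk hmono w₁ w₂ h12
    have hxy : x ≤ y := by omega
    have hkx := hk x le_rfl hxy
    rw [cycProd_succ r x y k hxy]
    simp only [Equiv.Perm.mul_apply]
    obtain ⟨ih1, ih2⟩ := ih (x+1) y (by omega) (by omega) hy
      (fun i hi1 hi2 => hk i (by omega) hi2) (fun i hi1 hi2 => hmono i (by omega) hi2)
      w₁ w₂ h12
    set u' := cycProd r k (x+1) y w₁ with hu'def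
    set v' := cycProd r k (x+1) y w₂ with hv'def
    have hne : (u' : ℕ) ≠ (v' : ℕ) := by
      intro hh
      have : w₁ = w₂ := (Equiv.injective _) (Fin.ext hh)
      rw [this] at h12
      omega
    have hu := cyc_apply r (x + 1 - k x) x (k x) rfl hkx.1 hkx.2 (le_trans hxy hy) u'
    have hv := cyc_apply r (x + 1 - k x) x (k x) rfl hkx.1 hkx.2 (le_trans hxy hy) v'
    have F1 : ¬ ((v':ℕ) < (u':ℕ)) ∨ x + 1 ≤ (u':ℕ) := Decidable.not_or_of_imp ih1
    have F2 : ¬ ((u':ℕ) + 2 ≤ (v':ℕ)) ∨ x + 1 ≤ (v':ℕ) := Decidable.not_or_of_imp ih2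
    rw [hu, hv]
    split_ifs <;> omega

lemma block_E (r x y : ℕ) (k : ℕ → ℕ) (hx : 1 ≤ x) (hxy : x ≤ y) (hy : y ≤ r)
    (hk : ∀ i, x ≤ i → i ≤ y → 1 ≤ k i ∧ k i ≤ i + 1)
    (hmono : ∀ i, x ≤ i → i < y → k i < k (i+1))
    (w₁ w₂ : Fin (r+1)) (h12 : (w₂:ℕ) = (w₁:ℕ) + 1)
    (h : ((cycProd r k x y) w₂ : ℕ) < ((cycProd r k x y) w₁ : ℕ)) :
    k x - 1 ≤ ((cycProd r k x y) w₂ : ℕ) := by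
  have hkx := hk x le_rfl hxy
  have hfixout : ∀ v : Fin (r+1), ¬ (k x - 1 ≤ (v:ℕ) ∧ (v:ℕ) ≤ y) → cycProd r k x y v = v := by
    intro v hv
    rcases Nat.lt_or_ge (v:ℕ) (k x - 1) with h' | h'
    · exact cycProd_fix_low r x y k hy hk hmono v (by omega)
    · exact cycProd_fix_high r x y k hy hk v (by omega)
  by_cases hP : k x - 1 ≤ (w₂:ℕ) ∧ (w₂:ℕ) ≤ y
  · exact (perm_preserve _ _ hfixout w₂ hP).1
  · have h2 := hfixout w₂ hP
    by_cases hP1 : k x - 1 ≤ (w₁:ℕ) ∧ (w₁:ℕ) ≤ y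
    · have h3 := perm_preserve _ _ hfixout w₁ hP1
      rw [h2] at h
      omega
    · have h3 := hfixout w₁ hP1
      rw [h2, h3] at h
      omega

lemma block_D (r : ℕ) (k : ℕ → ℕ) :
    ∀ n x y, y + 1 - x = n → 1 ≤ x → y ≤ r →
    (∀ i, x ≤ i → i ≤ y → 1 ≤ k i ∧ k i ≤ i + 1) →
    (∀ i, x ≤ i → i < y → k i < k (i+1)) →
    ∀ w₁ w₂ w₃ : Fin (r+1), (w₂:ℕ) = (w₁:ℕ) + 1 → (w₃:ℕ) = (w₂:ℕ) + 1 →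
      ¬ (((cycProd r k x y) w₂ : ℕ) < ((cycProd r k x y) w₁ : ℕ) ∧
         ((cycProd r k x y) w₃ : ℕ) < ((cycProd r k x y) w₂ : ℕ)) := by
  intro n
  induction n with
  | zero =>
    intro x y hn hx hy hk hmono w₁ w₂ w₃ h12 h23
    rw [cycProd_empty r x y k hn]
    simp only [Equiv.Perm.one_apply]
    omega
  | succ n ih =>
    intro x y hn hx hy hk hmono w₁ w₂ w₃ h12 h23
    have hxy : x ≤ y := by omega
    have hkx := hk x le_rfl hxy
    rw [cycProd_succ r x y k hxy]
    simp only [Equiv.Perm.mul_apply]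
    have hk' : ∀ i, x+1 ≤ i → i ≤ y → 1 ≤ k i ∧ k i ≤ i + 1 :=
      fun i hi1 hi2 => hk i (by omega) hi2
    have hmono' : ∀ i, x+1 ≤ i → i < y → k i < k (i+1) :=
      fun i hi1 hi2 => hmono i (by omega) hi2
    have hD' := ih (x+1) y (by omega) (by omega) hy hk' hmono' w₁ w₂ w₃ h12 h23
    set u' := cycProd r k (x+1) y w₁ with hu'def
    set v' := cycProd r k (x+1) y w₂ with hv'def
    set t' := cycProd r k (x+1) y w₃ with ht'def
    have hne12 : (u' : ℕ) ≠ (v' : ℕ) := by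
      intro hh
      have : w₁ = w₂ := (Equiv.injective _) (Fin.ext hh)
      rw [this] at h12; omega
    have hne23 : (v' : ℕ) ≠ (t' : ℕ) := by
      intro hh
      have : w₂ = w₃ := (Equiv.injective _) (Fin.ext hh)
      rw [this] at h23; omega
    have hu := cyc_apply r (x + 1 - k x) x (k x) rfl hkx.1 hkx.2 (le_trans hxy hy) u'
    have hv := cyc_apply r (x + 1 - k x) x (k x) rfl hkx.1 hkx.2 (le_trans hxy hy) v'
    have ht := cyc_apply r (x + 1 - k x) x (k x) rfl hkx.1 hkx.2 (le_trans hxy hy) t'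
    obtain ⟨hI1, hI2⟩ := block_i_ii r k (y + 1 - (x+1)) (x+1) y rfl (by omega) hy hk' hmono'
      w₂ w₃ h23
    have FI : ¬ ((t':ℕ) < (v':ℕ)) ∨ x + 1 ≤ (v':ℕ) := Decidable.not_or_of_imp hI1
    rcases Nat.eq_or_lt_of_le hxy with heq | hlt
    · -- x = y : inner product is the identity
      have hemp : cycProd r k (x+1) y = 1 := cycProd_empty r (x+1) y k (by omega)
      have hu'w : (u':ℕ) = (w₁:ℕ) := by rw [hu'def, hemp]; rfl
      have hv'w : (v':ℕ) = (w₂:ℕ) := by rw [hv'def, hemp]; rfl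
      have ht'w : (t':ℕ) = (w₃:ℕ) := by rw [ht'def, hemp]; rfl
      rw [hu, hv, ht]
      split_ifs <;> omega
    · have hkk : k x < k (x+1) := hmono x le_rfl hlt
      have hE : (v':ℕ) < (u':ℕ) → k (x+1) - 1 ≤ (v':ℕ) := fun hh =>
        block_E r (x+1) y k (by omega) (by omega) hy hk' hmono' w₁ w₂ h12 hh
      have FE : ¬ ((v':ℕ) < (u':ℕ)) ∨ k (x+1) - 1 ≤ (v':ℕ) := Decidable.not_or_of_imp hE
      rw [hu, hv, ht]
      split_ifs <;> omega

lemma psum_mono (c : ℕ → ℕ) {j j' : ℕ} (h : j ≤ j') : psum c j ≤ psum c j' :=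
  Finset.sum_le_sum_of_subset (Finset.Icc_subset_Icc_right h)

lemma psum_one (c : ℕ → ℕ) : psum c 1 = c 1 := by simp [psum]

lemma psum_step (c : ℕ → ℕ) (l : ℕ) (h : 1 ≤ l) : psum c l = psum c (l-1) + c l := by
  have h2 : psum c (l-1+1) = psum c (l-1) + c (l-1+1) := by
    rw [psum, psum, Finset.sum_Icc_succ_top (by omega : 1 ≤ l - 1 + 1)]
  rw [show l - 1 + 1 = l by omega] at h2
  exact h2

lemma tailProd_last (r a : ℕ) (c k : ℕ → ℕ) : tailProd r a c k (a+1) = 1 := by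
  rw [tailProd, Nat.sub_self]
  simp

lemma tailProd_succ (r a : ℕ) (c k : ℕ → ℕ) (l : ℕ) (h : l ≤ a) :
    tailProd r a c k l = cycProd r k (psum c (l-1)) (psum c l - 1) * tailProd r a c k (l+1) := by
  rw [tailProd, tailProd, show a + 1 - l = (a + 1 - (l+1)) + 1 by omega, List.range'_succ,
    List.map_cons, List.prod_cons]


/-- if `w = Π_2 ⋯ Π_a` sends every `α ∈ Δ_λ` to a negative root,
then (i) each `α_i ∈ Δ_λ` has a unique index `l(α_i) ∈ {2, …, a}` with
`Π_{l+1} ⋯ Π_a(α_i)` simple and `Π_l ⋯ Π_a(α_i)` negative; (ii) if `α_i, α_{i+1} ∈ Δ_λ`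
then `l(α_{i+1}) ≤ l(α_i) − 1`; in particular if `l(α_i) = 2` then `α_{i+1} ∉ Δ_λ`. -/
theorem stmt15 (r a m : ℕ) (hr : 1 ≤ r) (ha : 2 ≤ a) (c k p : ℕ → ℕ)
    (hc : ∀ j, 1 ≤ j → j ≤ a → 1 ≤ c j) (hcsum : psum c a = r + 1)
    (hka : ∀ i, psum c 1 ≤ i → i ≤ r → 1 ≤ k i ∧ k i ≤ i + 1)
    (hkb : ∀ j, 2 ≤ j → j ≤ a → ∀ i, psum c (j - 1) ≤ i → i + 1 ≤ psum c j - 1 →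
      k i < k (i + 1))
    (hm : 1 ≤ m) (hp : ∀ j, 1 ≤ j → j ≤ m → 1 ≤ p j) (hpsum : psum p m = r + 1)
    (hneg : ∀ i, inDelta r m p i → negRoot r (tailProd r a c k 2) i) :
    (∀ i, inDelta r m p i →
      ∃! l, 2 ≤ l ∧ l ≤ a ∧ simpleRoot r (tailProd r a c k (l + 1)) i ∧
        negRoot r (tailProd r a c k l) i) ∧
    (∀ i li li1, inDelta r m p i → inDelta r m p (i + 1) →
      (2 ≤ li ∧ li ≤ a ∧ simpleRoot r (tailProd r a c k (li + 1)) i ∧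
        negRoot r (tailProd r a c k li) i) →
      (2 ≤ li1 ∧ li1 ≤ a ∧ simpleRoot r (tailProd r a c k (li1 + 1)) (i + 1) ∧
        negRoot r (tailProd r a c k li1) (i + 1)) →
      li1 ≤ li - 1) ∧
    (∀ i, inDelta r m p i →
      (simpleRoot r (tailProd r a c k 3) i ∧ negRoot r (tailProd r a c k 2) i) →
      ¬ inDelta r m p (i + 1)) := by
  have hx1 : 1 ≤ psum c 1 := by
    rw [psum_one]
    exact hc 1 le_rfl (by omega)
  have hxlo : ∀ l, 2 ≤ l → l ≤ a → 1 ≤ psum c (l-1) := fun l h2 hla =>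
    le_trans hx1 (psum_mono c (by omega))
  have hyhi : ∀ l, l ≤ a → psum c l - 1 ≤ r := by
    intro l hla
    have := psum_mono c hla
    omega
  have hplpos : ∀ l, 1 ≤ l → l ≤ a → 1 ≤ psum c l := fun l h1 hla =>
    le_trans hx1 (psum_mono c h1)
  have hcut : ∀ l, 2 ≤ l → l ≤ a → ∀ i, psum c (l-1) ≤ i → i ≤ psum c l - 1 →
      1 ≤ k i ∧ k i ≤ i + 1 := by
    intro l h2 hla i h1 h2'
    have hy := hyhi l hla
    exact hka i (le_trans (psum_mono c (by omega)) h1) (by omega)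
  have hmon : ∀ l, 2 ≤ l → l ≤ a → ∀ i, psum c (l-1) ≤ i → i < psum c l - 1 →
      k i < k (i+1) := by
    intro l h2 hla i h1 h2'
    exact hkb l h2 hla i h1 (by omega)
  -- single persistence step for a "negative, high" pair of letters
  have Nstep : ∀ (w₁ w₂ : Fin (r+1)) (l : ℕ), 2 ≤ l → l ≤ a →
      ((tailProd r a c k (l+1) w₂ : ℕ) < (tailProd r a c k (l+1) w₁ : ℕ) ∧
        psum c l ≤ (tailProd r a c k (l+1) w₁ : ℕ)) →
      ((tailProd r a c k l w₂ : ℕ) < (tailProd r a c k l w₁ : ℕ) ∧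
        psum c (l-1) ≤ (tailProd r a c k l w₁ : ℕ)) := by
    intro w₁ w₂ l hl2 hla hh
    obtain ⟨hlt, hge⟩ := hh
    have hyr := hyhi l hla
    have hcutl := hcut l hl2 hla
    have hpl := hplpos l (by omega) hla
    have hmono' := psum_mono c (show l - 1 ≤ l by omega)
    rw [tailProd_succ r a c k l hla]
    simp only [Equiv.Perm.mul_apply]
    have hfix1 : cycProd r k (psum c (l-1)) (psum c l - 1) (tailProd r a c k (l+1) w₁)
        = tailProd r a c k (l+1) w₁ :=
      cycProd_fix_high r _ _ k hyr hcutl _ (by omega)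
    rw [hfix1]
    constructor
    · rcases Nat.lt_or_ge ((tailProd r a c k (l+1) w₂ : ℕ)) (psum c l) with h' | h'
      · have := cycProd_le_high r _ _ k hyr hcutl (tailProd r a c k (l+1) w₂) (by omega)
        omega
      · rw [cycProd_fix_high r _ _ k hyr hcutl _ (by omega)]
        exact hlt
    · omega
  -- iterated persistence
  have Npersist : ∀ (w₁ w₂ : Fin (r+1)) (l : ℕ), 2 ≤ l → l ≤ a + 1 →
      ((tailProd r a c k l w₂ : ℕ) < (tailProd r a c k l w₁ : ℕ) ∧
        psum c (l-1) ≤ (tailProd r a c k l w₁ : ℕ)) →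
      ∀ l', 2 ≤ l' → l' ≤ l →
      ((tailProd r a c k l' w₂ : ℕ) < (tailProd r a c k l' w₁ : ℕ) ∧
        psum c (l'-1) ≤ (tailProd r a c k l' w₁ : ℕ)) := by
    intro w₁ w₂ l hl2 hl hN
    have H : ∀ nn l', 2 ≤ l' → l' ≤ l → l - l' = nn →
        ((tailProd r a c k l' w₂ : ℕ) < (tailProd r a c k l' w₁ : ℕ) ∧
          psum c (l'-1) ≤ (tailProd r a c k l' w₁ : ℕ)) := by
      intro nn
      induction nn with
      | zero =>
        intro l' h2 hml h0
        have hlm : l' = l := by omega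
        rw [hlm]
        exact hN
      | succ nn ihn =>
        intro l' h2 hml h0
        have hnext := ihn (l'+1) (by omega) (by omega) (by omega)
        exact Nstep w₁ w₂ l' h2 (by omega) hnext
    exact fun l' h2 hml => H (l - l') l' h2 hml rfl
  -- trichotomy
  have tri : ∀ (w₁ w₂ : Fin (r+1)) (l : ℕ), 2 ≤ l → l ≤ a →
      (tailProd r a c k (l+1) w₂ : ℕ) = (tailProd r a c k (l+1) w₁ : ℕ) + 1 →
      ((tailProd r a c k l w₂ : ℕ) = (tailProd r a c k l w₁ : ℕ) + 1 ∨
       ((tailProd r a c k l w₂ : ℕ) < (tailProd r a c k l w₁ : ℕ) ∧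
         psum c (l-1) ≤ (tailProd r a c k l w₁ : ℕ)) ∨
       ((tailProd r a c k l w₁ : ℕ) + 2 ≤ (tailProd r a c k l w₂ : ℕ) ∧
         psum c (l-1) ≤ (tailProd r a c k l w₂ : ℕ))) := by
    intro w₁ w₂ l hl2 hla hS
    have hyr := hyhi l hla
    have hcutl := hcut l hl2 hla
    have hmonl := hmon l hl2 hla
    have hxl := hxlo l hl2 hla
    obtain ⟨b1, b2⟩ := block_i_ii r k (psum c l - 1 + 1 - psum c (l-1)) (psum c (l-1))
      (psum c l - 1) rfl hxl hyr hcutl hmonl (tailProd r a c k (l+1) w₁)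
      (tailProd r a c k (l+1) w₂) hS
    have hw12 : w₁ ≠ w₂ := by
      intro hh
      rw [hh] at hS
      omega
    have hne : (cycProd r k (psum c (l-1)) (psum c l - 1) (tailProd r a c k (l+1) w₁) : ℕ) ≠
        (cycProd r k (psum c (l-1)) (psum c l - 1) (tailProd r a c k (l+1) w₂) : ℕ) := by
      intro hh
      exact hw12 ((Equiv.injective _) ((Equiv.injective _) (Fin.ext hh)))
    have F1 := Decidable.not_or_of_imp b1
    have F2 := Decidable.not_or_of_imp b2
    rw [tailProd_succ r a c k l hla]
    simp only [Equiv.Perm.mul_apply]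
    omega
  -- PART 1
  have part1 : ∀ i, inDelta r m p i →
      ∃! l, 2 ≤ l ∧ l ≤ a ∧ simpleRoot r (tailProd r a c k (l + 1)) i ∧
        negRoot r (tailProd r a c k l) i := by
    intro i hi
    have hng := hneg i hi
    obtain ⟨hi1, hi2, _⟩ := hi
    have hF1 : (finOf r (i-1) : ℕ) = i - 1 := by simp [finOf]; omega
    have hF2 : (finOf r i : ℕ) = i := by simp [finOf]; omega
    rw [negRoot] at hng
    have main : ∀ nn l, 2 ≤ l → l ≤ a + 1 → a + 1 - l = nn →
        ((tailProd r a c k l (finOf r i) : ℕ) = (tailProd r a c k l (finOf r (i-1)) : ℕ) + 1 ∨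
         ∃ l0, l ≤ l0 ∧ l0 ≤ a ∧
           (tailProd r a c k (l0+1) (finOf r i) : ℕ) =
             (tailProd r a c k (l0+1) (finOf r (i-1)) : ℕ) + 1 ∧
           ((tailProd r a c k l0 (finOf r i) : ℕ) <
             (tailProd r a c k l0 (finOf r (i-1)) : ℕ) ∧
             psum c (l0-1) ≤ (tailProd r a c k l0 (finOf r (i-1)) : ℕ))) := by
      intro nn
      induction nn with
      | zero =>
        intro l h2 hla h0
        have hlm : l = a + 1 := by omega
        rw [hlm]
        left
        rw [tailProd_last]
        simp only [Equiv.Perm.one_apply]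
        omega
      | succ nn ihn =>
        intro l h2 hla h0
        have hla' : l ≤ a := by omega
        rcases ihn (l+1) (by omega) (by omega) (by omega) with hS | ⟨l0, hl0a, hl0b, hl0c, hl0d⟩
        · rcases tri (finOf r (i-1)) (finOf r i) l h2 hla' hS with h | h | h
          · exact Or.inl h
          · exact Or.inr ⟨l, le_rfl, hla', hS, h⟩
          · exfalso
            have hPinv : ((tailProd r a c k l (finOf r (i-1)) : ℕ) <
                (tailProd r a c k l (finOf r i) : ℕ) ∧
                psum c (l-1) ≤ (tailProd r a c k l (finOf r i) : ℕ)) := ⟨by omega, h.2⟩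
            have := Npersist (finOf r i) (finOf r (i-1)) l h2 (by omega) hPinv 2 le_rfl h2
            omega
        · exact Or.inr ⟨l0, by omega, hl0b, hl0c, hl0d⟩
    rcases main (a + 1 - 2) 2 le_rfl (by omega) rfl with hS2 | ⟨l0, _, hl0a, hl0S, hl0N⟩
    · omega
    · have toNC : ∀ l', 2 ≤ l' → l' ≤ a →
          (tailProd r a c k (l'+1) (finOf r i) : ℕ) =
            (tailProd r a c k (l'+1) (finOf r (i-1)) : ℕ) + 1 →
          (tailProd r a c k l' (finOf r i) : ℕ) < (tailProd r a c k l' (finOf r (i-1)) : ℕ) →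
          ((tailProd r a c k l' (finOf r i) : ℕ) <
            (tailProd r a c k l' (finOf r (i-1)) : ℕ) ∧
            psum c (l'-1) ≤ (tailProd r a c k l' (finOf r (i-1)) : ℕ)) := by
        intro l' h2 hla' hS' hn'
        rcases tri (finOf r (i-1)) (finOf r i) l' h2 hla' hS' with h | h | h
        · omega
        · exact h
        · omega
      refine ⟨l0, ⟨by omega, hl0a, hl0S, hl0N.1⟩, ?_⟩
      intro l' hl'
      obtain ⟨hl'2, hl'a, hs', hn'⟩ := hl'
      rw [simpleRoot] at hs'
      rw [negRoot] at hn'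
      have hNC' := toNC l' hl'2 hl'a hs' hn'
      by_contra hne'
      rcases Nat.lt_or_ge l' l0 with hlt | hge
      · have := Npersist (finOf r (i-1)) (finOf r i) l0 (by omega) (by omega) hl0N
          (l'+1) (by omega) (by omega)
        omega
      · have hlt : l0 < l' := by omega
        have := Npersist (finOf r (i-1)) (finOf r i) l' hl'2 (by omega) hNC'
          (l0+1) (by omega) (by omega)
        omega
  -- PART 2
  have part2 : ∀ i li li1, inDelta r m p i → inDelta r m p (i + 1) →
      (2 ≤ li ∧ li ≤ a ∧ simpleRoot r (tailProd r a c k (li + 1)) i ∧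
        negRoot r (tailProd r a c k li) i) →
      (2 ≤ li1 ∧ li1 ≤ a ∧ simpleRoot r (tailProd r a c k (li1 + 1)) (i + 1) ∧
        negRoot r (tailProd r a c k li1) (i + 1)) →
      li1 ≤ li - 1 := by
    intro i li li1 hi hi1 hpi hpi1
    obtain ⟨h2i, hia, hsi, hni⟩ := hpi
    obtain ⟨h2i1, hi1a, hsi1, hni1⟩ := hpi1
    obtain ⟨hia1, hia2, _⟩ := hi
    obtain ⟨hib1, hib2, _⟩ := hi1
    rw [simpleRoot] at hsi hsi1
    rw [negRoot] at hni hni1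
    rw [show (i + 1 - 1 : ℕ) = i by omega] at hsi1 hni1
    by_contra hcon
    have hge : li ≤ li1 := by omega
    rcases Nat.eq_or_lt_of_le hge with heq | hlt
    · -- li = li1 : double descent in one block, contradiction via block_D
      rw [← heq] at hsi1 hni1
      have hD := block_D r k (psum c li - 1 + 1 - psum c (li-1)) (psum c (li-1))
        (psum c li - 1) rfl (hxlo li h2i hia) (hyhi li hia) (hcut li h2i hia)
        (hmon li h2i hia) (tailProd r a c k (li+1) (finOf r (i-1)))
        (tailProd r a c k (li+1) (finOf r i)) (tailProd r a c k (li+1) (finOf r (i+1)))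
        hsi hsi1
      apply hD
      rw [tailProd_succ r a c k li hia] at hni hni1
      simp only [Equiv.Perm.mul_apply] at hni hni1
      exact ⟨hni, hni1⟩
    · -- li < li1
      have hNC1 : ((tailProd r a c k li1 (finOf r (i+1)) : ℕ) <
          (tailProd r a c k li1 (finOf r i) : ℕ) ∧
          psum c (li1-1) ≤ (tailProd r a c k li1 (finOf r i) : ℕ)) := by
        rcases tri (finOf r i) (finOf r (i+1)) li1 h2i1 hi1a hsi1 with h | h | h
        · omega
        · exact h
        · omega
      have hNCd := Npersist (finOf r i) (finOf r (i+1)) li1 h2i1 (by omega) hNC1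
        (li+1) (by omega) (by omega)
      simp only [Nat.add_sub_cancel] at hNCd
      have hyr := hyhi li hia
      have hcutl := hcut li h2i hia
      have hpl := hplpos li (by omega) hia
      have hBfix : cycProd r k (psum c (li-1)) (psum c li - 1)
          (tailProd r a c k (li+1) (finOf r i)) = tailProd r a c k (li+1) (finOf r i) :=
        cycProd_fix_high r _ _ k hyr hcutl _ (by omega)
      rw [tailProd_succ r a c k li hia] at hni
      simp only [Equiv.Perm.mul_apply] at hni
      rw [hBfix] at hni
      rcases Nat.lt_or_ge ((tailProd r a c k (li+1) (finOf r (i-1)) : ℕ)) (psum c li)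
        with hA | hA
      · have := cycProd_le_high r _ _ k hyr hcutl (tailProd r a c k (li+1) (finOf r (i-1)))
          (by omega)
        omega
      · rw [cycProd_fix_high r _ _ k hyr hcutl _ (by omega)] at hni
        omega
  refine ⟨part1, part2, ?_⟩
  intro i hi hpair hi1
  obtain ⟨li1, hli1, _⟩ := part1 (i+1) hi1
  have h32 : tailProd r a c k 3 = tailProd r a c k (2+1) := by norm_num
  have := part2 i 2 li1 hi hi1 ⟨le_rfl, ha, by rw [← h32]; exact hpair.1, hpair.2⟩ hli1
  omega
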